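/- Let π : X → B be a map of sets, {U_j}_{j ∈ J} a family of subsets of B, and f_j, g_j : π⁻¹(U_j) → S¹ maps. Suppose (Ω_{jk}) and (Λ_{jk}) are families of matrices in O(2) indexed by pairs (j,k) with U_j ∩ U_k ≠ ∅, such that ‖f_j(x) − Ω_{jk} f_k(x)‖ < ε_f and ‖g_j(x) − Λ_{jk} g_k(x)‖ < ε_g for all x ∈ π⁻¹(U_j ∩ U_k). Suppose further that for every pair (j,k) with U_j ∩ U_k ≠ ∅ the Hausdorff distance (Euclidean) between f_k(π⁻¹(U_j ∩ U_k)) and S¹ is strictly less than δ₁, where 0 ≤ δ₁ < 1, and that sup_{j ∈ J} sup_{x ∈ π⁻¹(U_j)} ‖f_j(x) − g_j(x)‖ < δ₂. Then for every pair (j,k) with U_j ∩ U_k ≠ ∅, ‖Ω_{jk} − Λ_{jk}‖_F < (√2/(1−δ₁))·(ε_f + ε_g + 2δ₂). -/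

import Mathlib

/-- The Frobenius norm of a real `2 × 2` matrix. -/
noncomputable def frobeniusNorm (A : Matrix (Fin 2) (Fin 2) ℝ) : ℝ :=
  Real.sqrt (∑ i, ∑ j, (A i j) ^ 2)

lemma norm_toEuclideanLin_orthogonal (A : Matrix.orthogonalGroup (Fin 2) ℝ)
    (v : EuclideanSpace ℝ (Fin 2)) :
    ‖Matrix.toEuclideanLin (A : Matrix (Fin 2) (Fin 2) ℝ) v‖ = ‖v‖ := by
  have hu : Matrix.toEuclideanCLM (𝕜 := ℝ) (A : Matrix (Fin 2) (Fin 2) ℝ) ∈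
      unitary (EuclideanSpace ℝ (Fin 2) →L[ℝ] EuclideanSpace ℝ (Fin 2)) := by
    constructor
    · rw [← map_star, ← map_mul]
      rw [Unitary.star_mul_self_of_mem A.2, map_one]
    · rw [← map_star, ← map_mul]
      rw [Unitary.mul_star_self_of_mem A.2, map_one]
  exact ContinuousLinearMap.norm_map_of_mem_unitary hu v

lemma frobeniusNorm_le_sqrt_two_mul (M : Matrix (Fin 2) (Fin 2) ℝ) (b : ℝ) (hb0 : 0 ≤ b)
    (hb : ∀ v : EuclideanSpace ℝ (Fin 2), ‖Matrix.toEuclideanLin M v‖ ≤ b * ‖v‖) :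
    frobeniusNorm M ≤ Real.sqrt 2 * b := by
  have hcol : ∀ j, ∑ i, (M i j) ^ 2 ≤ b ^ 2 := by
    intro j
    have h1 : ‖Matrix.toEuclideanLin M (EuclideanSpace.single j (1 : ℝ))‖ ≤ b := by
      have := hb (EuclideanSpace.single j (1 : ℝ))
      simpa [EuclideanSpace.norm_single] using this
    have happ : ∀ i, Matrix.toEuclideanLin M (EuclideanSpace.single j (1 : ℝ)) i = M i j := by
      intro i
      rw [Matrix.toEuclideanLin_apply, PiLp.ofLp_single, Matrix.mulVec_single]
      simp
    have hnorm : ‖Matrix.toEuclideanLin M (EuclideanSpace.single j (1 : ℝ))‖ ^ 2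
        = ∑ i, (M i j) ^ 2 := by
      rw [EuclideanSpace.norm_eq, Real.sq_sqrt (by positivity)]
      refine Finset.sum_congr rfl fun i _ => ?_
      rw [happ i, Real.norm_eq_abs, sq_abs]
    calc ∑ i, (M i j) ^ 2 = ‖Matrix.toEuclideanLin M (EuclideanSpace.single j (1 : ℝ))‖ ^ 2 :=
          hnorm.symm
      _ ≤ b ^ 2 := by
          have := norm_nonneg (Matrix.toEuclideanLin M (EuclideanSpace.single j (1 : ℝ)))
          nlinarith
  have hsum : ∑ i, ∑ j, (M i j) ^ 2 ≤ 2 * b ^ 2 := by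
    rw [Finset.sum_comm]
    have := hcol 0
    have := hcol 1
    rw [Fin.sum_univ_two]
    linarith
  have : frobeniusNorm M ≤ Real.sqrt (2 * b ^ 2) := by
    unfold frobeniusNorm
    exact Real.sqrt_le_sqrt hsum
  refine this.trans ?_
  rw [Real.sqrt_mul (by norm_num), Real.sqrt_sq hb0]

/-- If `(Ω_{jk})` and `(Λ_{jk})` respectively witness the discrete
approximate local trivializations `{f_j}` (quality `ε_f`) and `{g_j}` (quality `ε_g`),
the images `f_k(π⁻¹(U_j ∩ U_k))` are `δ₁`-Hausdorff close to `S¹` (`0 ≤ δ₁ < 1`), and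
`d_T({f_j}, {g_j}) < δ₂`, then on every nonempty double intersection
`‖Ω_{jk} − Λ_{jk}‖_F < (√2 / (1 − δ₁)) (ε_f + ε_g + 2 δ₂)`. -/
theorem witnesses_of_close_trivializations {X B J : Type*} (π : X → B) (U : J → Set B)
    (f g : J → X → EuclideanSpace ℝ (Fin 2)) (εf εg δ₁ δ₂ : ℝ)
    (hδ₁0 : 0 ≤ δ₁) (hδ₁1 : δ₁ < 1)
    (hfsph : ∀ j, ∀ x ∈ π ⁻¹' (U j),
      f j x ∈ Metric.sphere (0 : EuclideanSpace ℝ (Fin 2)) 1)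
    (hgsph : ∀ j, ∀ x ∈ π ⁻¹' (U j),
      g j x ∈ Metric.sphere (0 : EuclideanSpace ℝ (Fin 2)) 1)
    (Ω Λ : J → J → Matrix.orthogonalGroup (Fin 2) ℝ)
    (hΩ : ∀ j k, (U j ∩ U k).Nonempty → ∀ x ∈ π ⁻¹' (U j ∩ U k),
      ‖f j x - Matrix.toEuclideanLin ((Ω j k : Matrix (Fin 2) (Fin 2) ℝ)) (f k x)‖ < εf)
    (hΛ : ∀ j k, (U j ∩ U k).Nonempty → ∀ x ∈ π ⁻¹' (U j ∩ U k),
      ‖g j x - Matrix.toEuclideanLin ((Λ j k : Matrix (Fin 2) (Fin 2) ℝ)) (g k x)‖ < εg)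
    (hH : ∀ j k, (U j ∩ U k).Nonempty →
      EMetric.hausdorffEdist (f k '' (π ⁻¹' (U j ∩ U k)))
        (Metric.sphere (0 : EuclideanSpace ℝ (Fin 2)) 1) < ENNReal.ofReal δ₁)
    (hT : ∀ j, ∀ x ∈ π ⁻¹' (U j), ‖f j x - g j x‖ < δ₂) :
    ∀ j k, (U j ∩ U k).Nonempty →
      frobeniusNorm ((Ω j k : Matrix (Fin 2) (Fin 2) ℝ) - (Λ j k : Matrix (Fin 2) (Fin 2) ℝ))
        < Real.sqrt 2 / (1 - δ₁) * (εf + εg + 2 * δ₂) := by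
  intro j k hjk
  have h1δ : 0 < 1 - δ₁ := by linarith
  -- key pointwise bound on the image
  have key : ∀ v ∈ f k '' (π ⁻¹' (U j ∩ U k)),
      ‖Matrix.toEuclideanLin ((Ω j k : Matrix (Fin 2) (Fin 2) ℝ)
        - (Λ j k : Matrix (Fin 2) (Fin 2) ℝ)) v‖ < εf + εg + 2 * δ₂ := by
    rintro v ⟨x, hx, rfl⟩
    have hxj : x ∈ π ⁻¹' (U j) := hx.1
    have hxk : x ∈ π ⁻¹' (U k) := hx.2
    have h1 := hΩ j k hjk x hx
    have h2 := hΛ j k hjk x hx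
    have h3 := hT j x hxj
    have h4 := hT k x hxk
    have h5 : ‖Matrix.toEuclideanLin ((Λ j k : Matrix (Fin 2) (Fin 2) ℝ)) (g k x - f k x)‖
        < δ₂ := by
      rw [norm_toEuclideanLin_orthogonal (Λ j k), norm_sub_rev]
      exact h4
    have expand : Matrix.toEuclideanLin ((Ω j k : Matrix (Fin 2) (Fin 2) ℝ)
        - (Λ j k : Matrix (Fin 2) (Fin 2) ℝ)) (f k x)
        = -(f j x - Matrix.toEuclideanLin ((Ω j k : Matrix (Fin 2) (Fin 2) ℝ)) (f k x))
          + (f j x - g j x)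
          + (g j x - Matrix.toEuclideanLin ((Λ j k : Matrix (Fin 2) (Fin 2) ℝ)) (g k x))
          + Matrix.toEuclideanLin ((Λ j k : Matrix (Fin 2) (Fin 2) ℝ)) (g k x - f k x) := by
      rw [map_sub Matrix.toEuclideanLin, LinearMap.sub_apply,
        map_sub (Matrix.toEuclideanLin ((Λ j k : Matrix (Fin 2) (Fin 2) ℝ)))]
      abel
    have hle : ‖Matrix.toEuclideanLin ((Ω j k : Matrix (Fin 2) (Fin 2) ℝ)
        - (Λ j k : Matrix (Fin 2) (Fin 2) ℝ)) (f k x)‖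
        ≤ ‖f j x - Matrix.toEuclideanLin ((Ω j k : Matrix (Fin 2) (Fin 2) ℝ)) (f k x)‖
          + ‖f j x - g j x‖
          + ‖g j x - Matrix.toEuclideanLin ((Λ j k : Matrix (Fin 2) (Fin 2) ℝ)) (g k x)‖
          + ‖Matrix.toEuclideanLin ((Λ j k : Matrix (Fin 2) (Fin 2) ℝ)) (g k x - f k x)‖ := by
      rw [expand]
      refine (norm_add_le _ _).trans (add_le_add_left ((norm_add_le _ _).trans
        (add_le_add_left ((norm_add_le _ _).trans
          (add_le_add_left (le_of_eq (norm_neg _)) _)) _)) _)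
    linarith
  -- extremizer on the sphere
  obtain ⟨u, hu, hmax⟩ := (isCompact_sphere (0 : EuclideanSpace ℝ (Fin 2)) 1).exists_isMaxOn
    (NormedSpace.sphere_nonempty.mpr zero_le_one)
    (((Matrix.toEuclideanLin ((Ω j k : Matrix (Fin 2) (Fin 2) ℝ)
      - (Λ j k : Matrix (Fin 2) (Fin 2) ℝ))).continuous_of_finiteDimensional.norm).continuousOn)
  have hbound : ∀ v : EuclideanSpace ℝ (Fin 2),
      ‖Matrix.toEuclideanLin ((Ω j k : Matrix (Fin 2) (Fin 2) ℝ)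
        - (Λ j k : Matrix (Fin 2) (Fin 2) ℝ)) v‖
      ≤ ‖Matrix.toEuclideanLin ((Ω j k : Matrix (Fin 2) (Fin 2) ℝ)
        - (Λ j k : Matrix (Fin 2) (Fin 2) ℝ)) u‖ * ‖v‖ := by
    intro v
    rcases eq_or_ne v 0 with rfl | hv
    · simp
    · have hvn : (0 : ℝ) < ‖v‖ := norm_pos_iff.mpr hv
      have hmem : (‖v‖⁻¹ • v) ∈ Metric.sphere (0 : EuclideanSpace ℝ (Fin 2)) 1 := by
        rw [mem_sphere_zero_iff_norm, norm_smul, norm_inv, norm_norm,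
          inv_mul_cancel₀ hvn.ne']
      have h := hmax hmem
      simp only [Set.mem_setOf_eq, map_smul, norm_smul, norm_inv, norm_norm] at h
      rw [inv_mul_le_iff₀ hvn] at h
      linarith [h]
  have hLnonneg : (0 : ℝ) ≤ ‖Matrix.toEuclideanLin ((Ω j k : Matrix (Fin 2) (Fin 2) ℝ)
      - (Λ j k : Matrix (Fin 2) (Fin 2) ℝ)) u‖ := norm_nonneg _
  -- find a close point of the image
  have hinf : EMetric.infEdist u (f k '' (π ⁻¹' (U j ∩ U k))) < ENNReal.ofReal δ₁ := by
    refine lt_of_le_of_lt ?_ (hH j k hjk)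
    change _ ≤ Metric.hausdorffEDist _ _
    rw [Metric.hausdorffEDist_comm]
    exact EMetric.infEdist_le_hausdorffEdist_of_mem hu
  obtain ⟨v, hv, hdv⟩ := EMetric.infEdist_lt_iff.mp hinf
  have hdist : ‖u - v‖ < δ₁ := by
    rw [← dist_eq_norm]
    exact edist_lt_ofReal.mp hdv
  have hLu : ‖Matrix.toEuclideanLin ((Ω j k : Matrix (Fin 2) (Fin 2) ℝ)
      - (Λ j k : Matrix (Fin 2) (Fin 2) ℝ)) u‖ * (1 - δ₁) < εf + εg + 2 * δ₂ := by
    have e1 : Matrix.toEuclideanLin ((Ω j k : Matrix (Fin 2) (Fin 2) ℝ)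
        - (Λ j k : Matrix (Fin 2) (Fin 2) ℝ)) u
        = Matrix.toEuclideanLin ((Ω j k : Matrix (Fin 2) (Fin 2) ℝ)
          - (Λ j k : Matrix (Fin 2) (Fin 2) ℝ)) v
          + Matrix.toEuclideanLin ((Ω j k : Matrix (Fin 2) (Fin 2) ℝ)
            - (Λ j k : Matrix (Fin 2) (Fin 2) ℝ)) (u - v) := by
      rw [map_sub (Matrix.toEuclideanLin ((Ω j k : Matrix (Fin 2) (Fin 2) ℝ)
        - (Λ j k : Matrix (Fin 2) (Fin 2) ℝ)))]
      abel
    have h1 : ‖Matrix.toEuclideanLin ((Ω j k : Matrix (Fin 2) (Fin 2) ℝ)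
        - (Λ j k : Matrix (Fin 2) (Fin 2) ℝ)) u‖
        ≤ ‖Matrix.toEuclideanLin ((Ω j k : Matrix (Fin 2) (Fin 2) ℝ)
          - (Λ j k : Matrix (Fin 2) (Fin 2) ℝ)) v‖
          + ‖Matrix.toEuclideanLin ((Ω j k : Matrix (Fin 2) (Fin 2) ℝ)
            - (Λ j k : Matrix (Fin 2) (Fin 2) ℝ)) (u - v)‖ := by
      rw [e1]; exact norm_add_le _ _
    have h2 := hbound (u - v)
    have h3 := key v hv
    nlinarith [hLnonneg]
  have hfrob := frobeniusNorm_le_sqrt_two_mul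
    ((Ω j k : Matrix (Fin 2) (Fin 2) ℝ) - (Λ j k : Matrix (Fin 2) (Fin 2) ℝ)) _ hLnonneg hbound
  refine lt_of_le_of_lt hfrob ?_
  rw [div_mul_eq_mul_div, lt_div_iff₀ h1δ]
  have hs2 : (0 : ℝ) < Real.sqrt 2 := by positivity
  calc Real.sqrt 2 * ‖Matrix.toEuclideanLin ((Ω j k : Matrix (Fin 2) (Fin 2) ℝ)
        - (Λ j k : Matrix (Fin 2) (Fin 2) ℝ)) u‖ * (1 - δ₁)
      = Real.sqrt 2 * (‖Matrix.toEuclideanLin ((Ω j k : Matrix (Fin 2) (Fin 2) ℝ)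
        - (Λ j k : Matrix (Fin 2) (Fin 2) ℝ)) u‖ * (1 - δ₁)) := by ring
    _ < Real.sqrt 2 * (εf + εg + 2 * δ₂) := by exact (mul_lt_mul_iff_right₀ hs2).mpr hLu
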